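/- Call a finite set D of triples of natural numbers a valid decision set over m (m ≥ 2) if: (a) every (i,k,j) ∈ D satisfies 0 ≤ i < k < j ≤ m; (b) exactly one element of D has outer span (0,m); (c) for every (i,k,j) ∈ D, if k − i > 1 then exactly one element of D has outer span (i,k), and if j − k > 1 then exactly one element of D has outer span (k,j); and (d) every element of D whose outer span is not (0,m) has outer span equal to (i,k) or (k,j) for some (i,k,j) ∈ D. Then the map T ↦ S_edu(T) is a bijection from the set of discourse trees over m EDUs onto the set of valid decision sets over m; in particular, for every valid decision set D there is a unique discourse tree T over m EDUs with S_edu(T) = D. -/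
import Mathlib


/-- A discourse tree over the EDU interval `(i, j)`: a full binary tree whose
nodes are labeled by intervals, leaves are labeled `(i, i+1)`, and every
internal node labeled `(i, j)` has two children labeled `(i, k)` and `(k, j)`
for some `i < k < j`.  A discourse tree over `m` EDUs is a `DTree 0 m`. -/
inductive DTree : ℕ → ℕ → Type
  | leaf (i : ℕ) : DTree i (i + 1)
  | node {i k j : ℕ} : DTree i k → DTree k j → DTree i j

/-- The splitting-decision set `S_edu(T)`. -/
def DTree.splits : {i j : ℕ} → DTree i j → Finset (ℕ × ℕ × ℕ)
  | _, _, DTree.leaf _ => ∅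
  | _, _, @DTree.node i k j l r => insert (i, k, j) (l.splits ∪ r.splits)

/-- A valid decision set over `m`: (a) every `(i,k,j) ∈ D` satisfies
`0 ≤ i < k < j ≤ m`; (b) exactly one element of `D` has outer span `(0,m)`;
(c) for every `(i,k,j) ∈ D`, if `k − i > 1` then exactly one element of `D`
has outer span `(i,k)`, and if `j − k > 1` then exactly one element of `D` has
outer span `(k,j)`; (d) every element of `D` whose outer span is not `(0,m)`
has outer span `(i,k)` or `(k,j)` for some `(i,k,j) ∈ D`. -/
def ValidDecisionSet (m : ℕ) (D : Finset (ℕ × ℕ × ℕ)) : Prop :=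
  (∀ i k j : ℕ, (i, k, j) ∈ D → i < k ∧ k < j ∧ j ≤ m) ∧
  (∃! k : ℕ, (0, k, m) ∈ D) ∧
  (∀ i k j : ℕ, (i, k, j) ∈ D →
    (k - i > 1 → ∃! k' : ℕ, (i, k', k) ∈ D) ∧
    (j - k > 1 → ∃! k' : ℕ, (k, k', j) ∈ D)) ∧
  (∀ i k j : ℕ, (i, k, j) ∈ D → ¬(i = 0 ∧ j = m) →
    ∃ i' k' j' : ℕ, (i', k', j') ∈ D ∧
      ((i = i' ∧ j = k') ∨ (i = k' ∧ j = j')))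

lemma DTree.lt : ∀ {i j : ℕ}, DTree i j → i < j
  | _, _, .leaf i => Nat.lt_succ_self i
  | _, _, .node l r => l.lt.trans r.lt

lemma DTree.mem_splits : ∀ {i j : ℕ} (T : DTree i j) {a b c : ℕ},
    (a, b, c) ∈ T.splits → i ≤ a ∧ a < b ∧ b < c ∧ c ≤ j
  | _, _, .leaf i, a, b, c, h => by simp [DTree.splits] at h
  | _, _, @DTree.node i k j l r, a, b, c, h => by
    simp only [DTree.splits, Finset.mem_insert, Finset.mem_union] at h
    rcases h with h | h | h
    · simp only [Prod.mk.injEq] at h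
      obtain ⟨rfl, rfl, rfl⟩ := h
      have := l.lt; have := r.lt; omega
    · have := l.mem_splits h; have := r.lt; omega
    · have := r.mem_splits h; have := l.lt; omega

lemma DTree.unique_span : ∀ {i j : ℕ} (T : DTree i j) {p q q' r : ℕ},
    (p, q, r) ∈ T.splits → (p, q', r) ∈ T.splits → q = q'
  | _, _, .leaf i, p, q, q', r, h, _ => by simp [DTree.splits] at h
  | _, _, @DTree.node i k j l r, p, q, q', s, h1, h2 => by
    have hik := l.lt; have hkj := r.lt
    simp only [DTree.splits, Finset.mem_insert, Finset.mem_union] at h1 h2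
    rcases h1 with h1 | h1 | h1 <;> rcases h2 with h2 | h2 | h2
    · simp_all
    · have := l.mem_splits h2; simp_all; omega
    · have := r.mem_splits h2; simp_all; omega
    · have := l.mem_splits h1; simp_all; omega
    · exact l.unique_span h1 h2
    · have := l.mem_splits h1; have := r.mem_splits h2; omega
    · have := r.mem_splits h1; simp_all; omega
    · have := r.mem_splits h1; have := l.mem_splits h2; omega
    · exact r.unique_span h1 h2

lemma DTree.root_split : ∀ {i j : ℕ} (T : DTree i j), i + 1 < j → ∃ k, (i, k, j) ∈ T.splits
  | _, _, .leaf i, h => absurd h (by omega)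
  | _, _, @DTree.node i k j l r, _ => ⟨k, Finset.mem_insert_self _ _⟩

lemma DTree.splits_child : ∀ {i j : ℕ} (T : DTree i j) {p q r : ℕ}, (p, q, r) ∈ T.splits →
    (p + 1 < q → ∃ s, (p, s, q) ∈ T.splits) ∧ (q + 1 < r → ∃ s, (q, s, r) ∈ T.splits)
  | _, _, .leaf i, p, q, r, h => by simp [DTree.splits] at h
  | _, _, @DTree.node i k j l r, p, q, s, h => by
    simp only [DTree.splits, Finset.mem_insert, Finset.mem_union] at h
    have mem : ∀ {x : ℕ × ℕ × ℕ}, (x ∈ l.splits ∨ x ∈ r.splits) →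
        x ∈ (DTree.node l r).splits := by
      intro x hx
      simp only [DTree.splits, Finset.mem_insert, Finset.mem_union]
      tauto
    rcases h with h | h | h
    · simp only [Prod.mk.injEq] at h
      obtain ⟨rfl, rfl, rfl⟩ := h
      constructor
      · intro hp
        obtain ⟨t, ht⟩ := l.root_split hp
        exact ⟨t, mem (Or.inl ht)⟩
      · intro hq
        obtain ⟨t, ht⟩ := r.root_split hq
        exact ⟨t, mem (Or.inr ht)⟩
    · obtain ⟨h1, h2⟩ := l.splits_child h
      exact ⟨fun hp => (h1 hp).imp fun t ht => mem (Or.inl ht),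
             fun hq => (h2 hq).imp fun t ht => mem (Or.inl ht)⟩
    · obtain ⟨h1, h2⟩ := r.splits_child h
      exact ⟨fun hp => (h1 hp).imp fun t ht => mem (Or.inr ht),
             fun hq => (h2 hq).imp fun t ht => mem (Or.inr ht)⟩

lemma DTree.parent : ∀ {i j : ℕ} (T : DTree i j) {p q r : ℕ}, (p, q, r) ∈ T.splits →
    ¬(p = i ∧ r = j) → ∃ a b c, (a, b, c) ∈ T.splits ∧ ((p = a ∧ r = b) ∨ (p = b ∧ r = c))
  | _, _, .leaf i, p, q, r, h, _ => by simp [DTree.splits] at h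
  | _, _, @DTree.node i k j l r, p, q, s, h, hne => by
    have top : (i, k, j) ∈ (DTree.node l r).splits := Finset.mem_insert_self _ _
    have mem : ∀ {x : ℕ × ℕ × ℕ}, (x ∈ l.splits ∨ x ∈ r.splits) →
        x ∈ (DTree.node l r).splits := by
      intro x hx
      simp only [DTree.splits, Finset.mem_insert, Finset.mem_union]
      tauto
    simp only [DTree.splits, Finset.mem_insert, Finset.mem_union] at h
    rcases h with h | h | h
    · simp only [Prod.mk.injEq] at h; exact absurd ⟨h.1, h.2.2⟩ hne
    · by_cases hc : p = i ∧ s = k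
      · exact ⟨i, k, j, top, Or.inl hc⟩
      · obtain ⟨a, b, c, hmem, hor⟩ := l.parent h hc
        exact ⟨a, b, c, mem (Or.inl hmem), hor⟩
    · by_cases hc : p = k ∧ s = j
      · exact ⟨i, k, j, top, Or.inr hc⟩
      · obtain ⟨a, b, c, hmem, hor⟩ := r.parent h hc
        exact ⟨a, b, c, mem (Or.inr hmem), hor⟩

lemma DTree.splits_inj : ∀ {i j : ℕ} (T₁ T₂ : DTree i j), T₁.splits = T₂.splits → T₁ = T₂ := by
  intro i j T₁
  induction T₁ with
  | leaf i =>
    intro T₂ h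
    cases T₂ with
    | leaf => rfl
    | node l r => have := l.lt; have := r.lt; omega
  | node l₁ r₁ ihl ihr =>
    rename_i i k j
    intro T₂ h
    have hik := l₁.lt; have hkj := r₁.lt
    cases T₂ with
    | leaf => omega
    | node l₂ r₂ =>
      rename_i k₂
      have hik2 := l₂.lt; have hkj2 := r₂.lt
      have hkk : k = k₂ := by
        have : (i, k, j) ∈ (DTree.node l₂ r₂).splits := h ▸ Finset.mem_insert_self _ _
        simp only [DTree.splits, Finset.mem_insert, Finset.mem_union] at this
        rcases this with h' | h' | h'
        · simp_all
        · have := l₂.mem_splits h'; omega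
        · have := r₂.mem_splits h'; omega
      subst hkk
      have hl : l₁.splits = l₂.splits := by
        ext ⟨a, b, c⟩
        constructor <;> intro hx
        · have hb := l₁.mem_splits hx
          have : (a, b, c) ∈ (DTree.node l₂ r₂).splits := by
            rw [← h]
            simp only [DTree.splits, Finset.mem_insert, Finset.mem_union]
            tauto
          simp only [DTree.splits, Finset.mem_insert, Finset.mem_union] at this
          rcases this with h' | h' | h'
          · simp only [Prod.mk.injEq] at h'; omega
          · exact h'
          · have := r₂.mem_splits h'; omega
        · have hb := l₂.mem_splits hx
          have : (a, b, c) ∈ (DTree.node l₁ r₁).splits := by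
            rw [h]
            simp only [DTree.splits, Finset.mem_insert, Finset.mem_union]
            tauto
          simp only [DTree.splits, Finset.mem_insert, Finset.mem_union] at this
          rcases this with h' | h' | h'
          · simp only [Prod.mk.injEq] at h'; omega
          · exact h'
          · have := r₁.mem_splits h'; omega
      have hr : r₁.splits = r₂.splits := by
        ext ⟨a, b, c⟩
        constructor <;> intro hx
        · have hb := r₁.mem_splits hx
          have : (a, b, c) ∈ (DTree.node l₂ r₂).splits := by
            rw [← h]
            simp only [DTree.splits, Finset.mem_insert, Finset.mem_union]
            tauto
          simp only [DTree.splits, Finset.mem_insert, Finset.mem_union] at this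
          rcases this with h' | h' | h'
          · simp only [Prod.mk.injEq] at h'; omega
          · have := l₂.mem_splits h'; omega
          · exact h'
        · have hb := r₂.mem_splits hx
          have : (a, b, c) ∈ (DTree.node l₁ r₁).splits := by
            rw [h]
            simp only [DTree.splits, Finset.mem_insert, Finset.mem_union]
            tauto
          simp only [DTree.splits, Finset.mem_insert, Finset.mem_union] at this
          rcases this with h' | h' | h'
          · simp only [Prod.mk.injEq] at h'; omega
          · have := l₁.mem_splits h'; omega
          · exact h'
      rw [ihl l₂ hl, ihr r₂ hr]

lemma build (D : Finset (ℕ × ℕ × ℕ))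
    (hab : ∀ a b c : ℕ, (a, b, c) ∈ D → a < b ∧ b < c)
    (hc : ∀ a b c : ℕ, (a, b, c) ∈ D →
      (b - a > 1 → ∃ k, (a, k, b) ∈ D) ∧ (c - b > 1 → ∃ k, (b, k, c) ∈ D)) :
    ∀ (n i j : ℕ), j - i ≤ n → i < j → (i + 1 < j → ∃ k, (i, k, j) ∈ D) →
      ∃ T : DTree i j, T.splits ⊆ D := by
  intro n
  induction n with
  | zero => intro i j h1 h2; omega
  | succ n ih =>
    intro i j h1 h2 hroot
    by_cases hj : j = i + 1
    · subst hj
      exact ⟨DTree.leaf i, by simp [DTree.splits]⟩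
    · obtain ⟨k, hk⟩ := hroot (by omega)
      obtain ⟨hik, hkj⟩ := hab _ _ _ hk
      obtain ⟨Tl, hTl⟩ := ih i k (by omega) hik
        (fun h => (hc _ _ _ hk).1 (by omega))
      obtain ⟨Tr, hTr⟩ := ih k j (by omega) hkj
        (fun h => (hc _ _ _ hk).2 (by omega))
      refine ⟨DTree.node Tl Tr, ?_⟩
      intro x hx
      simp only [DTree.splits, Finset.mem_insert, Finset.mem_union] at hx
      rcases hx with rfl | hx | hx
      · exact hk
      · exact hTl hx
      · exact hTr hx

lemma cover (m : ℕ) (hm : 2 ≤ m) (D : Finset (ℕ × ℕ × ℕ)) (hD : ValidDecisionSet m D)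
    (T : DTree 0 m) (hsub : T.splits ⊆ D) :
    ∀ (n a b c : ℕ), (a, b, c) ∈ D → m - (c - a) ≤ n → (a, b, c) ∈ T.splits := by
  obtain ⟨ha, hb, hc, hd⟩ := hD
  intro n
  induction n using Nat.strong_induction_on with
  | _ n ih =>
    intro a b c hmem hn
    obtain ⟨hab, hbc, hcm⟩ := ha _ _ _ hmem
    by_cases hroot : a = 0 ∧ c = m
    · obtain ⟨rfl, rfl⟩ := hroot
      obtain ⟨k, hk⟩ := T.root_split (by omega)
      have : b = k := hb.unique hmem (hsub hk)
      exact this ▸ hk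
    · obtain ⟨a', b', c', hpar, hor⟩ := hd _ _ _ hmem hroot
      obtain ⟨hab', hbc', hcm'⟩ := ha _ _ _ hpar
      have hlt : c - a < m := by omega
      have hlt' : c - a < c' - a' := by omega
      have hpar' : (a', b', c') ∈ T.splits :=
        ih (m - (c' - a')) (by omega) _ _ _ hpar (le_refl _)
      obtain ⟨hch1, hch2⟩ := T.splits_child hpar'
      rcases hor with ⟨rfl, rfl⟩ | ⟨rfl, rfl⟩
      · obtain ⟨s, hs⟩ := hch1 (by omega)
        obtain ⟨u1, u2⟩ := (hc _ _ _ hpar).1 (by omega)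
        obtain ⟨k', hk'1, hk'2⟩ := (hc _ _ _ hpar).1 (by omega)
        have hbk : b = k' := hk'2 _ hmem
        have hsk : s = k' := hk'2 _ (hsub hs)
        rw [hbk, ← hsk]
        exact hs
      · obtain ⟨s, hs⟩ := hch2 (by omega)
        obtain ⟨k', hk'1, hk'2⟩ := (hc _ _ _ hpar).2 (by omega)
        have hbk : b = k' := hk'2 _ hmem
        have hsk : s = k' := hk'2 _ (hsub hs)
        rw [hbk, ← hsk]
        exact hs

/-- The map `T ↦ S_edu(T)` is a bijection from discourse trees over `m` EDUs
(`m ≥ 2`) onto valid decision sets over `m`: it lands in valid decision sets,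
it is injective, and every valid decision set `D` is `S_edu(T)` for a unique
discourse tree `T`. -/
theorem splits_bijection_onto_valid_decision_sets (m : ℕ) (hm : 2 ≤ m) :
    (∀ T : DTree 0 m, ValidDecisionSet m T.splits) ∧
    (∀ T₁ T₂ : DTree 0 m, T₁.splits = T₂.splits → T₁ = T₂) ∧
    (∀ D : Finset (ℕ × ℕ × ℕ), ValidDecisionSet m D →
      ∃! T : DTree 0 m, T.splits = D) := by
  refine ⟨?_, fun T₁ T₂ => DTree.splits_inj T₁ T₂, ?_⟩
  · intro T
    refine ⟨?_, ?_, ?_, ?_⟩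
    · intro i k j h
      have := T.mem_splits h; omega
    · obtain ⟨k, hk⟩ := T.root_split (by omega)
      exact ⟨k, hk, fun k' hk' => T.unique_span hk' hk⟩
    · intro i k j h
      obtain ⟨h1, h2⟩ := T.splits_child h
      constructor
      · intro hki
        obtain ⟨s, hs⟩ := h1 (by omega)
        exact ⟨s, hs, fun s' hs' => T.unique_span hs' hs⟩
      · intro hjk
        obtain ⟨s, hs⟩ := h2 (by omega)
        exact ⟨s, hs, fun s' hs' => T.unique_span hs' hs⟩
    · intro i k j h hne
      obtain ⟨a, b, c, hmem, hor⟩ := T.parent h hne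
      exact ⟨a, b, c, hmem, hor⟩
  · intro D hD
    obtain ⟨ha, hb, hc, hd⟩ := hD
    obtain ⟨T, hT⟩ := build D (fun a b c h => ⟨(ha a b c h).1, (ha a b c h).2.1⟩)
      (fun a b c h => ⟨fun h1 => (hc a b c h).1 h1 |>.exists,
                       fun h1 => (hc a b c h).2 h1 |>.exists⟩)
      m 0 m (by omega) (by omega) (fun _ => hb.exists)
    have heq : T.splits = D := by
      apply Finset.Subset.antisymm hT
      intro ⟨a, b, c⟩ hx
      exact cover m hm D ⟨ha, hb, hc, hd⟩ T hT (m - (c - a)) a b c hx (le_refl _)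
    exact ⟨T, heq, fun T' hT' => DTree.splits_inj T' T (hT'.trans heq.symm)⟩
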